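/- The functor KV_1^an is split exact: given a split extension A ↣ B ↠ C of complete, torsionfree bornological V-algebras, one has GL(A)' = GL(B)' ∩ GL(A), and the induced sequence KV_1^an(A) → KV_1^an(B) → KV_1^an(C) is exact with the first map injective. -/
import Mathlib


/-- Split exactness of `KV₁^an`.  Given a split extension
`A ↣ B ↠ C` of complete, torsionfree bornological `V`-algebras, apply the functors
`GL` and `GL(P̂(−))` (which preserve kernels): we obtain groups
`GA = GL(A), GB = GL(B), GC = GL(C)` and `PGA = GL(P̂A), PGB = GL(P̂B), PGC = GL(P̂C)`,
with induced maps `i, p` (and split `s`), their path-level analogues `iP, pP, sP`, and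
evaluation-at-one homomorphisms `eA, eB, eC` commuting with everything.  With
`GL(X)' := range(e_X)` and `KV₁^an(X) = GL(X)/GL(X)'`, one has
`GL(A)' = GL(B)' ∩ GL(A)`, and the induced sequence
`KV₁^an(A) → KV₁^an(B) → KV₁^an(C)` is exact with the first map injective. -/
theorem stmt12 {GA GB GC PGA PGB PGC : Type}
    [Group GA] [Group GB] [Group GC] [Group PGA] [Group PGB] [Group PGC]
    (i : GA →* GB) (p : GB →* GC) (s : GC →* GB)
    (iP : PGA →* PGB) (pP : PGB →* PGC) (sP : PGC →* PGB)
    (eA : PGA →* GA) (eB : PGB →* GB) (eC : PGC →* GC)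
    -- the extension is split
    (hsplit : p.comp s = MonoidHom.id GC)
    (hsplitP : pP.comp sP = MonoidHom.id PGC)
    -- `GL` and `GL(P̂(−))` preserve kernels
    (hinj : Function.Injective i) (hinjP : Function.Injective iP)
    (hker : i.range = p.ker) (hkerP : iP.range = pP.ker)
    -- naturality of the evaluation maps and of the splitting
    (hnat1 : eB.comp iP = i.comp eA) (hnat2 : eC.comp pP = p.comp eB)
    (hnat3 : eB.comp sP = s.comp eC)
    [hNA : (eA.range).Normal] [hNB : (eB.range).Normal] [hNC : (eC.range).Normal] :
    -- `GL(A)' = GL(B)' ∩ GL(A)` (inside `GL(B)`)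
    Subgroup.map i eA.range = eB.range ⊓ i.range ∧
    -- exactness of `KV₁^an(A) → KV₁^an(B) → KV₁^an(C)` with the first map injective
    ∃ (ibar : GA ⧸ eA.range →* GB ⧸ eB.range)
      (pbar : GB ⧸ eB.range →* GC ⧸ eC.range),
      (∀ g : GA, ibar (QuotientGroup.mk g) = QuotientGroup.mk (i g)) ∧
      (∀ g : GB, pbar (QuotientGroup.mk g) = QuotientGroup.mk (p g)) ∧
      Function.Injective ibar ∧ ibar.range = pbar.ker := by
  have h1 : ∀ x, eB (iP x) = i (eA x) := fun x => DFunLike.congr_fun hnat1 x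
  have h2 : ∀ x, eC (pP x) = p (eB x) := fun x => DFunLike.congr_fun hnat2 x
  have h3 : ∀ x, eB (sP x) = s (eC x) := fun x => DFunLike.congr_fun hnat3 x
  have hps : ∀ x, p (s x) = x := fun x => DFunLike.congr_fun hsplit x
  have hpsP : ∀ x, pP (sP x) = x := fun x => DFunLike.congr_fun hsplitP x
  have hpi : ∀ a : GA, p (i a) = 1 := by
    intro a
    have : i a ∈ p.ker := hker ▸ ⟨a, rfl⟩
    exact this
  -- main subgroup equality
  have hmain : Subgroup.map i eA.range = eB.range ⊓ i.range := by
    apply le_antisymm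
    · rintro b ⟨a, ⟨x, rfl⟩, rfl⟩
      exact ⟨⟨iP x, h1 x⟩, ⟨eA x, rfl⟩⟩
    · rintro b ⟨⟨q, rfl⟩, ⟨a, ha⟩⟩
      have hpq : p (eB q) = 1 := by rw [← ha, hpi]
      have hq'ker : q * (sP (pP q))⁻¹ ∈ pP.ker := by
        simp [hpsP]
      have hq'range : q * (sP (pP q))⁻¹ ∈ iP.range := by rw [hkerP]; exact hq'ker
      obtain ⟨r, hr⟩ := hq'range
      have heq : i (eA r) = eB q := by
        rw [← h1, hr]
        simp [h3, h2, hpq]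
      exact ⟨eA r, ⟨r, rfl⟩, heq⟩
  have hcompA : eA.range ≤ eB.range.comap i := by
    rintro a ⟨x, rfl⟩; exact ⟨iP x, h1 x⟩
  have hcompB : eB.range ≤ eC.range.comap p := by
    rintro b ⟨x, rfl⟩; exact ⟨pP x, h2 x⟩
  refine ⟨hmain, QuotientGroup.map _ _ i hcompA, QuotientGroup.map _ _ p hcompB,
    fun g => rfl, fun g => rfl, ?_, ?_⟩
  · -- injectivity of ibar
    rw [injective_iff_map_eq_one]
    intro x hx
    induction x using QuotientGroup.induction_on with
    | H g =>
      have hg : i g ∈ eB.range := by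
        rwa [QuotientGroup.map_mk, QuotientGroup.eq_one_iff] at hx
      have : i g ∈ Subgroup.map i eA.range := by
        rw [hmain]; exact ⟨hg, ⟨g, rfl⟩⟩
      obtain ⟨a, ha, hai⟩ := this
      rw [QuotientGroup.eq_one_iff]
      rwa [← hinj hai]
  · -- exactness
    ext x
    induction x using QuotientGroup.induction_on with
    | H b =>
      constructor
      · rintro ⟨y, hy⟩
        induction y using QuotientGroup.induction_on with
        | H a =>
          have : (QuotientGroup.map eB.range eC.range p hcompB)
              ((QuotientGroup.map eA.range eB.range i hcompA) (QuotientGroup.mk a)) = 1 := by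
            simp [QuotientGroup.map_mk, QuotientGroup.eq_one_iff, hpi a]
          rw [hy] at this
          exact this
      · intro hb
        have hpb : p b ∈ eC.range := by
          rwa [MonoidHom.mem_ker, QuotientGroup.map_mk, QuotientGroup.eq_one_iff] at hb
        obtain ⟨q, hq⟩ := hpb
        have hpb' : p (b * (eB (sP q))⁻¹) = 1 := by
          simp [h3, hq, hps]
        have hbr : b * (eB (sP q))⁻¹ ∈ i.range := by
          rw [hker]; exact hpb'
        obtain ⟨a, ha⟩ := hbr
        refine ⟨QuotientGroup.mk a, ?_⟩
        rw [QuotientGroup.map_mk, ha]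
        apply (QuotientGroup.eq ..).mpr
        simpa using Subgroup.inv_mem _ ⟨sP q, rfl⟩
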